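/- Uniqueness of the mean as Bregman minimizer: let O ⊆ ℝ^d be an open convex set, φ : O → ℝ strictly convex and continuously differentiable, and let U be an integrable ℝ^d-valued random variable taking values almost surely in O with E[U] ∈ O. Then for every x ∈ O with x ≠ E[U], E[ d_φ(U, x) − d_φ(U, E[U]) ] > 0; that is, E[U] is the unique minimizer of x ↦ E[d_φ(U, x)] over O. -/

import Mathlib

open scoped RealInnerProductSpace
open MeasureTheory

/-- Strict Bregman gradient inequality: if `φ` is strictly convex on `O` and has gradient
`gx` at `x ∈ O`, then for any `m ∈ O` with `m ≠ x`, `⟪m - x, gx⟫ < φ m - φ x`. -/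
lemma bregman_strict_gradient_ineq {d : ℕ}
    {O : Set (EuclideanSpace ℝ (Fin d))}
    {φ : EuclideanSpace ℝ (Fin d) → ℝ}
    (hφ : StrictConvexOn ℝ O φ)
    {x m gx : EuclideanSpace ℝ (Fin d)} (hx : x ∈ O) (hm : m ∈ O) (hne : m ≠ x)
    (hgx : HasGradientAt φ gx x) :
    ⟪m - x, gx⟫ < φ m - φ x := by
  set v : EuclideanSpace ℝ (Fin d) := m - x with hv
  have hvne : v ≠ 0 := sub_ne_zero.mpr hne
  set f : ℝ → ℝ := fun t => φ (x + t • v) with hf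
  set S : Set ℝ := {t : ℝ | x + t • v ∈ O} with hS
  have h0 : (0 : ℝ) ∈ S := by simp [hS, hx]
  have h1 : (1 : ℝ) ∈ S := by
    simp only [hS, Set.mem_setOf_eq, one_smul, hv]
    simpa using hm
  have key : ∀ (a b ta tb : ℝ), ta + tb = 1 →
      x + (ta • a + tb • b) • v = ta • (x + a • v) + tb • (x + b • v) := by
    intro a b ta tb htab
    have hx1 : ta • x + tb • x = x := by rw [← add_smul, htab, one_smul]
    rw [eq_comm, smul_add, smul_add, smul_smul, smul_smul, add_add_add_comm, hx1,
      ← add_smul, smul_eq_mul, smul_eq_mul]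
  have hSconv : Convex ℝ S := by
    intro a ha b hb ta tb hta htb htab
    show x + (ta • a + tb • b) • v ∈ O
    rw [key a b ta tb htab]
    exact hφ.1 ha hb hta htb htab
  have hfstrict : StrictConvexOn ℝ S f := by
    refine ⟨hSconv, fun a ha b hb hab ta tb hta htb htab => ?_⟩
    have hne' : x + a • v ≠ x + b • v := by
      intro h
      exact hab (smul_left_injective ℝ hvne (add_left_cancel h))
    calc f (ta • a + tb • b) = φ (x + (ta • a + tb • b) • v) := rfl
      _ = φ (ta • (x + a • v) + tb • (x + b • v)) := by rw [key a b ta tb htab]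
      _ < ta • φ (x + a • v) + tb • φ (x + b • v) := hφ.2 ha hb hne' hta htb htab
      _ = ta • f a + tb • f b := rfl
  have hline : HasDerivAt (fun t : ℝ => x + t • v) v 0 := by
    simpa using ((hasDerivAt_id (0:ℝ)).smul_const v).const_add x
  have hf0 : HasDerivAt f ⟪v, gx⟫ 0 := by
    have hgx' : HasFDerivAt φ ((InnerProductSpace.toDual ℝ _) gx) (x + (0:ℝ) • v) := by
      simpa using hgx.hasFDerivAt
    have hcomp := hgx'.comp_hasDerivAt 0 hline
    show HasDerivAt (fun t : ℝ => φ (x + t • v)) ⟪v, gx⟫ 0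
    rw [real_inner_comm, ← InnerProductSpace.toDual_apply_apply]
    exact hcomp
  have hlt := hfstrict.lt_slope_of_hasDerivAt h0 h1 one_pos hf0
  rw [slope_def_field] at hlt
  simp only [hf] at hlt
  have : x + (1:ℝ) • v = m := by rw [one_smul, hv]; abel
  rw [this] at hlt
  simpa [div_eq_mul_inv] using hlt

/-- Uniqueness of the mean as Bregman minimizer: for a strictly convex, continuously
differentiable `φ` (with gradient `g`) on an open convex set `O ⊆ ℝ^d` and an integrable
random variable `U` taking values a.s. in `O` with `E[U] ∈ O`, for every `x ∈ O` with
`x ≠ E[U]`, `E[ d_φ(U, x) − d_φ(U, E[U]) ] > 0`; i.e. `E[U]` is the unique minimizer of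
`x ↦ E[d_φ(U, x)]` over `O`. -/
theorem bregman_mean_unique_minimizer {d : ℕ} {Ω : Type*} [MeasurableSpace Ω]
    (μ : Measure Ω) [IsProbabilityMeasure μ]
    {O : Set (EuclideanSpace ℝ (Fin d))} (hO : IsOpen O) (hOconv : Convex ℝ O)
    {φ : EuclideanSpace ℝ (Fin d) → ℝ}
    {g : EuclideanSpace ℝ (Fin d) → EuclideanSpace ℝ (Fin d)}
    (hφ : StrictConvexOn ℝ O φ)
    (hg : ∀ v ∈ O, HasGradientAt φ (g v) v)
    (hgcont : ContinuousOn g O)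
    (U : Ω → EuclideanSpace ℝ (Fin d))
    (hU : Integrable U μ)
    (hUO : ∀ᵐ ω ∂μ, U ω ∈ O)
    (hmean : (∫ ω, U ω ∂μ) ∈ O) :
    ∀ x ∈ O, x ≠ (∫ ω, U ω ∂μ) →
      0 < ∫ ω, ((φ (U ω) - φ x - ⟪U ω - x, g x⟫)
          - (φ (U ω) - φ (∫ ω', U ω' ∂μ)
              - ⟪U ω - (∫ ω', U ω' ∂μ), g (∫ ω', U ω' ∂μ)⟫)) ∂μ := by
  intro x hx hxm
  set m : EuclideanSpace ℝ (Fin d) := ∫ ω, U ω ∂μ with hmdef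
  have hsubx : Integrable (fun ω => U ω - x) μ := hU.sub (integrable_const x)
  have hsubm : Integrable (fun ω => U ω - m) μ := hU.sub (integrable_const m)
  have hint1 : Integrable (fun ω => ⟪U ω - x, g x⟫) μ := hsubx.inner_const _
  have hint2 : Integrable (fun ω => ⟪U ω - m, g m⟫) μ :=
    hsubm.inner_const _
  have heq : (fun ω => ((φ (U ω) - φ x - ⟪U ω - x, g x⟫)
          - (φ (U ω) - φ m - ⟪U ω - m, g m⟫)))
      = fun ω => (φ m - φ x) + (⟪U ω - m, g m⟫ - ⟪U ω - x, g x⟫) := by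
    funext ω; ring
  rw [show (∫ ω, ((φ (U ω) - φ x - ⟪U ω - x, g x⟫)
          - (φ (U ω) - φ m - ⟪U ω - m, g m⟫)) ∂μ)
      = ∫ ω, ((φ m - φ x) + (⟪U ω - m, g m⟫ - ⟪U ω - x, g x⟫)) ∂μ from by rw [heq]]
  have hI2 : (∫ ω, ⟪U ω - m, g m⟫ ∂μ) = 0 := by
    have : (fun ω => ⟪U ω - m, g m⟫) = fun ω => ⟪g m, U ω - m⟫ := by
      funext ω; exact real_inner_comm _ _
    rw [this, integral_inner hsubm (g m),
      integral_sub hU (integrable_const m), integral_const]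
    simp [← hmdef]
  have hI1 : (∫ ω, ⟪U ω - x, g x⟫ ∂μ) = ⟪m - x, g x⟫ := by
    have : (fun ω => ⟪U ω - x, g x⟫) = fun ω => ⟪g x, U ω - x⟫ := by
      funext ω; exact real_inner_comm _ _
    rw [this, integral_inner hsubx (g x),
      integral_sub hU (integrable_const x), integral_const]
    simp only [measure_univ, ENNReal.toReal_one, probReal_univ, one_smul, ← hmdef]
    exact real_inner_comm _ _
  have hdiff : Integrable (fun ω => ⟪U ω - m, g m⟫ - ⟪U ω - x, g x⟫) μ := hint2.sub hint1
  rw [integral_add (integrable_const _) hdiff, integral_sub hint2 hint1,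
    hI1, hI2, integral_const]
  simp only [measure_univ, ENNReal.toReal_one, probReal_univ, one_smul, smul_eq_mul, zero_sub]
  have := bregman_strict_gradient_ineq hφ hx hmean (Ne.symm hxm) (hg x hx)
  linarith
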